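/- Let δ := ω·(α - σ(α)), let π be a unit of R, and suppose u₀ ∈ K satisfies algebraMap K R (u₀) · (π·σ(π)) = δ·σ(δ). Then the following identity holds in the formal power series ring K[[x]]: (Σ_{p≥0} ε(δ^p · π · (π⁻¹)^p)·x^p) · (1 - ε(π)·u₀·x + u₀·x²) = ε(π) + (2 - ε(π)²·u₀)·x, where π⁻¹ denotes the inverse of the unit π and δ^p · π · (π⁻¹)^p represents δ^p·π^{1-p}. -/

import Mathlib

open Polynomial TensorProduct

noncomputable section

variable {K : Type*} [CommRing K]

abbrev Quad (s p : K) : Type _ := AdjoinRoot (X ^ 2 - C s * X + C p)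

def qα (s p : K) : Quad s p := AdjoinRoot.root _

lemma quad_monic (s p : K) : (X ^ 2 - C s * X + C p : K[X]).Monic := by
  monicity!

lemma quad_degree [Nontrivial K] (s p : K) :
    (X ^ 2 - C s * X + C p : K[X]).degree = 2 := by
  compute_degree!

lemma quad_repr [Nontrivial K] (s p : K) (z : Quad s p) :
    ∃ a b : K, z = algebraMap K (Quad s p) a + algebraMap K (Quad s p) b * qα s p := by
  obtain ⟨q, rfl⟩ := AdjoinRoot.mk_surjective z
  set f : K[X] := X ^ 2 - C s * X + C p with hf
  have hm : f.Monic := quad_monic s p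
  have hdeg : (q %ₘ f).degree ≤ 1 := by
    have h2 := Polynomial.degree_modByMonic_lt q hm
    rw [quad_degree s p] at h2
    exact Order.lt_succ_iff.mp (by exact_mod_cast h2)
  refine ⟨(q %ₘ f).coeff 0, (q %ₘ f).coeff 1, ?_⟩
  have hq : AdjoinRoot.mk f q = AdjoinRoot.mk f (q %ₘ f) := by
    conv_lhs => rw [← Polynomial.modByMonic_add_div q f]
    rw [map_add, map_mul, AdjoinRoot.mk_self, zero_mul, add_zero]
  rw [hq]
  conv_lhs => rw [Polynomial.eq_X_add_C_of_degree_le_one hdeg]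
  rw [map_add, map_mul, AdjoinRoot.mk_C, AdjoinRoot.mk_C, AdjoinRoot.mk_X]
  simp [qα, AdjoinRoot.algebraMap_eq, add_comm]
  rfl

lemma quad_aeval_root (s p : K) :
    (aeval (qα s p)) (X ^ 2 - C s * X + C p) = 0 := by
  simp [qα, AdjoinRoot.aeval_eq, AdjoinRoot.mk_self]

def qσ (s p : K) : Quad s p →ₐ[K] Quad s p :=
  AdjoinRoot.liftAlgHom _ (Algebra.ofId K (Quad s p)) (algebraMap K (Quad s p) s - qα s p) (by
    change (aeval (algebraMap K (Quad s p) s - qα s p)) (X ^ 2 - C s * X + C p) = 0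
    have h := quad_aeval_root s p
    simp only [map_add, map_sub, map_mul, map_pow, aeval_X, aeval_C] at h ⊢
    linear_combination h)

lemma qσ_root (s p : K) : qσ s p (qα s p) = algebraMap K (Quad s p) s - qα s p := by
  simp [qσ, qα, AdjoinRoot.liftAlgHom_root]


lemma series_helper (a : ℕ → K) (c u e0 e1 : K)
    (h0 : a 0 = e0) (h1 : a 1 - c * a 0 = e1)
    (h : ∀ n, a (n + 2) - c * a (n + 1) + u * a n = 0) :
    PowerSeries.mk a *
      (1 - PowerSeries.C (R := K) c * PowerSeries.X + PowerSeries.C (R := K) u * PowerSeries.X ^ 2)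
    = PowerSeries.C (R := K) e0 + PowerSeries.C (R := K) e1 * PowerSeries.X := by
  have expand : PowerSeries.mk a *
      (1 - PowerSeries.C (R := K) c * PowerSeries.X + PowerSeries.C (R := K) u * PowerSeries.X ^ 2)
      = PowerSeries.mk a - (PowerSeries.mk a * PowerSeries.C (R := K) c) * PowerSeries.X
        + ((PowerSeries.mk a * PowerSeries.C (R := K) u) * PowerSeries.X) * PowerSeries.X := by
    ring
  rw [expand]
  ext n
  rw [map_add, map_sub, map_add]
  match n with
  | 0 =>
    simp only [PowerSeries.coeff_zero_mul_X, PowerSeries.coeff_mk, PowerSeries.coeff_C,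
      PowerSeries.coeff_zero_eq_constantCoeff, map_mul]
    simp [h0]
  | 1 =>
    rw [PowerSeries.coeff_succ_mul_X, PowerSeries.coeff_succ_mul_X,
      PowerSeries.coeff_zero_mul_X, PowerSeries.coeff_mul_C]
    simp only [PowerSeries.coeff_mk, PowerSeries.coeff_C, PowerSeries.coeff_X, map_mul]
    simpa [mul_comm] using h1
  | (n + 2) =>
    rw [PowerSeries.coeff_succ_mul_X, PowerSeries.coeff_succ_mul_X,
      PowerSeries.coeff_mul_C, PowerSeries.coeff_succ_mul_X, PowerSeries.coeff_mul_C]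
    simp only [PowerSeries.coeff_mk, PowerSeries.coeff_C, PowerSeries.coeff_X, map_mul]
    simp only [PowerSeries.coeff_C_mul, PowerSeries.coeff_X]
    norm_num
    rw [if_neg (show ¬ n + 2 = 1 by omega)]
    linear_combination h n

/-- With `δ = ω·(α - σ α)`, a unit `π` of `R`, and `u₀ ∈ K` with
`u₀·π·σ(π) = δ·σ(δ)`, the power series identity
`(Σ_p ε(δ^p·π^{1-p}) x^p)·(1 - ε(π)·u₀·x + u₀·x²) = ε(π) + (2 - ε(π)²·u₀)·x`
holds in `K[[x]]`. -/
theorem stmt9 (s p : K) (ω : (Quad s p)ˣ) (ε : Quad s p →ₗ[K] K)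
    (hω : ε (ω : Quad s p) = 0) (hωα : ε ((ω : Quad s p) * qα s p) = 1)
    (π : (Quad s p)ˣ) (u₀ : K)
    (hu₀ : algebraMap K (Quad s p) u₀ * ((π : Quad s p) * qσ s p (π : Quad s p))
      = (ω : Quad s p) * (qα s p - qσ s p (qα s p)) *
          qσ s p ((ω : Quad s p) * (qα s p - qσ s p (qα s p)))) :
    (PowerSeries.mk fun n : ℕ =>
        ε (((ω : Quad s p) * (qα s p - qσ s p (qα s p))) ^ n
            * (π : Quad s p) * ((π⁻¹ : (Quad s p)ˣ) : Quad s p) ^ n)) *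
      (1 - PowerSeries.C (R := K) (ε (π : Quad s p) * u₀) * PowerSeries.X
         + PowerSeries.C (R := K) u₀ * PowerSeries.X ^ 2)
    = PowerSeries.C (R := K) (ε (π : Quad s p))
        + PowerSeries.C (R := K) (2 - (ε (π : Quad s p)) ^ 2 * u₀) * PowerSeries.X := by
  nontriviality K
  set A : (Quad s p) := qα s p with hA
  set W : (Quad s p) := (ω : (Quad s p)) with hW
  set P : (Quad s p) := (π : (Quad s p)) with hP
  set Q : (Quad s p) := ((π⁻¹ : (Quad s p)ˣ) : (Quad s p)) with hQ
  set SW : (Quad s p) := qσ s p W with hSW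
  set SP : (Quad s p) := qσ s p P with hSP
  have hσA : qσ s p A = algebraMap K (Quad s p) s - A := qσ_root s p
  set δ : (Quad s p) := W * (A - qσ s p A) with hδ
  -- coordinates of π with respect to ω, ωα
  obtain ⟨x, y, hxy0⟩ := quad_repr s p (((ω⁻¹ : (Quad s p)ˣ) : (Quad s p)) * P)
  have hωinv : W * ((ω⁻¹ : (Quad s p)ˣ) : (Quad s p)) = 1 := ω.mul_inv
  have hxy : P = algebraMap K (Quad s p) x * W + algebraMap K (Quad s p) y * (W * A) := by
    have := congrArg (fun z => W * z) hxy0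
    simp only [← mul_assoc, hωinv, one_mul] at this
    rw [this]; ring
  have hεπ : ε P = y := by
    rw [hxy]
    rw [← Algebra.smul_def, ← Algebra.smul_def, map_add, map_smul, map_smul, hω, hωα]
    simp
  -- σ of π in coordinates
  have hSP' : SP = algebraMap K (Quad s p) x * SW + algebraMap K (Quad s p) y * (SW * (algebraMap K (Quad s p) s - A)) := by
    rw [hSP, hxy]
    simp only [map_add, map_mul, AlgHom.commutes, hσA]
    rw [← hSW]
  have hσδ : qσ s p δ = SW * ((algebraMap K (Quad s p) s - A) - A) := by
    rw [hδ, map_mul, map_sub, hσA, map_sub, AlgHom.commutes, hσA, ← hSW]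
    ring_nf
  -- key identity: δ * σπ + σδ * π = y • (δ * σδ)
  have hI : δ * SP + qσ s p δ * P = algebraMap K (Quad s p) y * (δ * qσ s p δ) := by
    rw [hσδ, hSP', hxy, hδ, hσA]
    ring
  -- E = 0
  have hQP : Q * P = 1 := π.inv_mul
  have hSPinv : SP * qσ s p Q = 1 := by
    rw [hSP, hQ, ← map_mul, hP]
    rw [Units.mul_inv, map_one]
  have hu₀' : algebraMap K (Quad s p) u₀ * (P * SP) = δ * qσ s p δ := by
    rw [hSP]; exact hu₀
  have hEσ : (δ ^ 2 - algebraMap K (Quad s p) (y * u₀) * (δ * P) + algebraMap K (Quad s p) u₀ * P ^ 2) * SP = 0 := by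
    have h := hI
    have h2 := hu₀'
    rw [map_mul]
    linear_combination δ * h + (P - algebraMap K (Quad s p) y * δ) * h2
  have hE : δ ^ 2 - algebraMap K (Quad s p) (y * u₀) * (δ * P) + algebraMap K (Quad s p) u₀ * P ^ 2 = 0 := by
    have := congrArg (fun z => z * qσ s p Q) hEσ
    simpa [mul_assoc, hSPinv] using this
  -- the recurrence for coefficients
  set a : ℕ → K := fun n => ε (δ ^ n * P * Q ^ n) with ha
  have ha0 : a 0 = ε P := by simp [ha]
  have hδ2 : ε δ = 2 := by
    have : δ = (2 : K) • (W * A) - s • W := by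
      rw [hδ, hσA, Algebra.smul_def, Algebra.smul_def, map_ofNat]
      ring
    rw [this, map_sub, map_smul, map_smul, hωα, hω]
    simp
  have ha1 : a 1 = 2 := by
    have : δ ^ 1 * P * Q ^ 1 = δ * (P * Q) := by ring
    rw [ha]
    simp only [this]
    simp only [hP, hQ, π.mul_inv, mul_one, hδ2]
  have hrec : ∀ n : ℕ, a (n + 2) - (ε P * u₀) * a (n + 1) + u₀ * a n = 0 := by
    intro n
    have hz : δ ^ (n + 2) * P * Q ^ (n + 2)
        - (ε P * u₀) • (δ ^ (n + 1) * P * Q ^ (n + 1))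
        + u₀ • (δ ^ n * P * Q ^ n) = 0 := by
      rw [Algebra.smul_def, Algebra.smul_def, hεπ]
      have e1 : δ ^ (n + 2) * P * Q ^ (n + 2)
          = (δ ^ n * P * Q ^ n) * (Q ^ 2 * δ ^ 2) := by ring
      have e2 : δ ^ (n + 1) * P * Q ^ (n + 1) = (δ ^ n * P * Q ^ n) * (Q * δ) := by ring
      rw [e1, e2]
      have key : Q ^ 2 * δ ^ 2 - algebraMap K (Quad s p) (y * u₀) * (Q * δ) + algebraMap K (Quad s p) u₀ = 0 := by
        linear_combination Q ^ 2 * hE + (algebraMap K (Quad s p) (y * u₀) * δ * Q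
          - algebraMap K (Quad s p) u₀ * (Q * P + 1)) * hQP
      linear_combination (δ ^ n * P * Q ^ n) * key
    have := congrArg ε hz
    rw [map_add, map_sub, map_smul, map_smul, map_zero] at this
    simpa [ha, smul_eq_mul] using this
  -- power series computation
  have ha1' : a 1 - (ε P * u₀) * a 0 = 2 - (ε P) ^ 2 * u₀ := by
    rw [ha1, ha0]; ring
  exact series_helper a (ε P * u₀) u₀ (ε P) (2 - (ε P) ^ 2 * u₀) ha0 ha1' hrec

end
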